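/- arXiv:2605.27996 — 2 statements merged into one kernel-verified Lean document; each statement's English description precedes it below -/
import Mathlib

section
/- There exist parameters (with K = 3 features, G = Σ having unit diagonal, G₁₂ = ρ, G₁₃ = σ₁₃, G₂₃ = 0) such that applying the canonical single-axis mitigation M₁ strictly increases the L² norm of the proxy reward: with (g₁,g₂,g₃) = (0.5, 1, 1), ρ = −0.6, σ₁₃ = −0.4, one has ‖M₁(R̃)‖² − ‖R̃‖² = 0.75 > 0. -/
open MeasureTheory Matrix

/-- Norm increase under the canonical mitigation: with K = 3 features,
Gram matrix G = Σ with unit diagonal, G₁₂ = ρ = −3/5, G₁₃ = σ₁₃ = −2/5, G₂₃ = 0, and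
reliance (g₁,g₂,g₃) = (1/2, 1, 1), applying M₁ strictly increases the L² norm of the
proxy: ‖M₁(R̃)‖² − ‖R̃‖² = 3/4 > 0. -/
theorem mitigation_norm_increase
    {Ω : Type*} [MeasurableSpace Ω] (μ : Measure Ω) [IsProbabilityMeasure μ]
    (Φ : Fin 3 → Ω → ℝ) (Rt : Ω → ℝ)
    (hΦ : ∀ i, MemLp (Φ i) 2 μ) (hRt : MemLp Rt 2 μ)
    (G : Matrix (Fin 3) (Fin 3) ℝ)
    (hGdef : G = Matrix.of (fun i j => ∫ ω, Φ i ω * Φ j ω ∂μ))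
    (hGval : G = !![1, -3/5, -2/5; -3/5, 1, 0; -2/5, 0, 1])
    (hGpd : G.PosDef)
    (g : Fin 3 → ℝ)
    (hg : g = G⁻¹ *ᵥ (fun k => ∫ ω, Φ k ω * Rt ω ∂μ))
    (hgval : g = ![1/2, 1, 1])
    (R' : Ω → ℝ)
    (hR' : R' = fun ω => Rt ω - g 0 * Φ 0 ω) :
    (∫ ω, R' ω ^ 2 ∂μ) - (∫ ω, Rt ω ^ 2 ∂μ) = 3/4 ∧
      (∫ ω, Rt ω ^ 2 ∂μ) < ∫ ω, R' ω ^ 2 ∂μ := by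
  have hg0 : g 0 = 1/2 := by rw [hgval]; rfl
  have hGinv : IsUnit G.det := hGpd.det_pos.ne'.isUnit
  have hGv : G *ᵥ g = (fun k => ∫ ω, Φ k ω * Rt ω ∂μ) := by
    rw [hg, Matrix.mulVec_mulVec, Matrix.mul_nonsing_inv _ hGinv, Matrix.one_mulVec]
  have ha : (∫ ω, Φ 0 ω * Rt ω ∂μ) = -(1/2) := by
    have h := congrFun hGv 0
    rw [hGval, hgval] at h
    simp [Matrix.mulVec, dotProduct, Fin.sum_univ_three] at h
    linarith
  have hG00 : (∫ ω, Φ 0 ω * Φ 0 ω ∂μ) = 1 := by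
    have h1 : G 0 0 = ∫ ω, Φ 0 ω * Φ 0 ω ∂μ := by rw [hGdef]; rfl
    rw [hGval] at h1
    norm_num at h1
    linarith
  have hΦ0 := hΦ 0
  have imul : ∀ (f h : Ω → ℝ), MemLp f 2 μ → MemLp h 2 μ →
      Integrable (fun ω => f ω * h ω) μ := by
    intro f h hf hh
    refine Integrable.mono' ((hf.integrable_sq.add hh.integrable_sq).const_mul (1/2))
      (hf.aestronglyMeasurable.mul hh.aestronglyMeasurable)
      (Filter.Eventually.of_forall fun ω => ?_)
    have := sq_nonneg (|f ω| - |h ω|)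
    have h1 : ‖f ω * h ω‖ = |f ω| * |h ω| := by rw [Real.norm_eq_abs, abs_mul]
    rw [h1]
    simp only [Pi.add_apply]
    nlinarith [sq_abs (f ω), sq_abs (h ω)]
  have iRR : Integrable (fun ω => Rt ω * Rt ω) μ := imul _ _ hRt hRt
  have iΦΦ : Integrable (fun ω => Φ 0 ω * Φ 0 ω) μ := imul _ _ hΦ0 hΦ0
  have iΦR : Integrable (fun ω => Φ 0 ω * Rt ω) μ := imul _ _ hΦ0 hRt
  have key : (∫ ω, R' ω ^ 2 ∂μ)
      = (∫ ω, Rt ω * Rt ω ∂μ) - 2 * (g 0) * (∫ ω, Φ 0 ω * Rt ω ∂μ)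
        + (g 0)^2 * (∫ ω, Φ 0 ω * Φ 0 ω ∂μ) := by
    have expand : ∀ ω, R' ω ^ 2
        = Rt ω * Rt ω - 2 * (g 0) * (Φ 0 ω * Rt ω) + (g 0)^2 * (Φ 0 ω * Φ 0 ω) := by
      intro ω; rw [hR']; ring
    calc (∫ ω, R' ω ^ 2 ∂μ)
        = ∫ ω, (Rt ω * Rt ω - 2 * (g 0) * (Φ 0 ω * Rt ω)
            + (g 0)^2 * (Φ 0 ω * Φ 0 ω)) ∂μ :=
          integral_congr_ae (Filter.Eventually.of_forall expand)
      _ = (∫ ω, Rt ω * Rt ω ∂μ) - 2 * (g 0) * (∫ ω, Φ 0 ω * Rt ω ∂μ)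
            + (g 0)^2 * (∫ ω, Φ 0 ω * Φ 0 ω ∂μ) := by
          have h1 := integral_sub iRR (iΦR.const_mul (2 * g 0))
          have h2 := integral_add (iRR.sub (iΦR.const_mul (2 * g 0)))
            (iΦΦ.const_mul ((g 0)^2))
          simp only [Pi.sub_apply] at h2
          rw [h2, h1, integral_const_mul, integral_const_mul]
  have hsq : (∫ ω, Rt ω ^ 2 ∂μ) = ∫ ω, Rt ω * Rt ω ∂μ := by
    simp only [pow_two]
  rw [key, hsq, hg0, ha, hG00]
  constructor <;> [ring; linarith]
end

section
/- Four-instance impossibility construction: with μ_diag = N(0, I₃), R̃(y) = y₁+y₂+y₃, R(y) = y₃, M₁(R̃)(y) = y₂+y₃, and four reference-policy covariances Σ^(k) (unit diagonal, Σ₂₃ = 0) given by (Σ₁₂,Σ₁₃) ∈ {(0,−1/2), (1/2,−1/2), (1/2,δ), (0,1/2)} for fixed 0 < δ < 1/2, each Σ^(k) is positive definite, and the resulting drift pairs (Δ₂, ΔJ) = (−Σ₁₂/β, −Σ₁₃/β) are respectively (0, 1/(2β)), (−1/(2β), 1/(2β)), (−1/(2β), −δ/β), (0, −1/(2β)): that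 is, they realize the sign patterns (Δ₂=0, ΔJ>0), (Δ₂≠0, ΔJ>0), (Δ₂≠0, ΔJ<0), (Δ₂=0, ΔJ<0). -/
open Matrix

lemma aux_posdef (ρ σ : ℝ) (h : ρ^2 + σ^2 < 1) :
    (!![1, ρ, σ; ρ, 1, 0; σ, 0, 1] : Matrix (Fin 3) (Fin 3) ℝ).PosDef := by
  rw [Matrix.posDef_iff_dotProduct_mulVec]
  constructor
  · ext i j
    fin_cases i <;> fin_cases j <;>
      simp [Matrix.conjTranspose, Matrix.transpose]
  · intro x hx
    have hx' : x 0 ≠ 0 ∨ x 1 ≠ 0 ∨ x 2 ≠ 0 := by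
      by_contra hcon
      push_neg at hcon
      apply hx
      funext i
      fin_cases i <;> simp [hcon.1, hcon.2.1, hcon.2.2]
    simp only [Matrix.mulVec, dotProduct, Fin.sum_univ_three, RCLike.re_to_real,
      Pi.star_apply, star_trivial]
    simp [Matrix.cons_val_zero, Matrix.cons_val_one]
    rcases eq_or_ne (x 0) 0 with h0 | h0
    · have h12 : x 1 ≠ 0 ∨ x 2 ≠ 0 := by
        rcases hx' with h | h | h
        · exact absurd h0 h
        · exact Or.inl h
        · exact Or.inr h
      rw [h0]
      rcases h12 with h1 | h2
      · nlinarith [pow_two_pos_of_ne_zero h1, sq_nonneg (x 2)]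
      · nlinarith [pow_two_pos_of_ne_zero h2, sq_nonneg (x 1)]
    · nlinarith [mul_pos (show (0:ℝ) < 1 - ρ^2 - σ^2 by linarith)
        (pow_two_pos_of_ne_zero h0), sq_nonneg (ρ * x 0 + x 1), sq_nonneg (σ * x 0 + x 2)]

/-- Four-instance impossibility construction: with
R̃(y) = y₁+y₂+y₃ (coefficients c = (1,1,1)), M₁(R̃)(y) = y₂+y₃ (c' = (0,1,1)),
and four reference covariances Σ (unit diagonal, Σ₂₃ = 0) given by
(Σ₁₂,Σ₁₃) ∈ {(0,−1/2), (1/2,−1/2), (1/2,δ), (0,1/2)} with 0 < δ < 1/2, each Σ is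
positive definite, and the drift pairs Δ₂ = (Σ(c'−c))₂/β, ΔJ = (Σ(c'−c))₃/β are
respectively (0, 1/(2β)), (−1/(2β), 1/(2β)), (−1/(2β), −δ/β), (0, −1/(2β)),
realizing the sign patterns (Δ₂=0,ΔJ>0), (Δ₂≠0,ΔJ>0), (Δ₂≠0,ΔJ<0), (Δ₂=0,ΔJ<0). -/
theorem four_instance_construction
    (β δ : ℝ) (hβ : 0 < β) (hδ0 : 0 < δ) (hδ : δ < 1/2)
    (Sig : ℝ → ℝ → Matrix (Fin 3) (Fin 3) ℝ)
    (hSig : ∀ ρ σ : ℝ, Sig ρ σ = !![1, ρ, σ; ρ, 1, 0; σ, 0, 1])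
    (c c' : Fin 3 → ℝ) (hc : c = ![1, 1, 1]) (hc' : c' = ![0, 1, 1])
    (Δ₂ ΔJ : ℝ → ℝ → ℝ)
    (hΔ₂ : ∀ ρ σ, Δ₂ ρ σ = (Sig ρ σ *ᵥ (c' - c)) 1 / β)
    (hΔJ : ∀ ρ σ, ΔJ ρ σ = (Sig ρ σ *ᵥ (c' - c)) 2 / β) :
    ((Sig 0 (-(1/2))).PosDef ∧ (Sig (1/2) (-(1/2))).PosDef ∧
      (Sig (1/2) δ).PosDef ∧ (Sig 0 (1/2)).PosDef) ∧
    (Δ₂ 0 (-(1/2)) = 0 ∧ ΔJ 0 (-(1/2)) = 1/(2*β)) ∧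
    (Δ₂ (1/2) (-(1/2)) = -(1/(2*β)) ∧ ΔJ (1/2) (-(1/2)) = 1/(2*β)) ∧
    (Δ₂ (1/2) δ = -(1/(2*β)) ∧ ΔJ (1/2) δ = -(δ/β)) ∧
    (Δ₂ 0 (1/2) = 0 ∧ ΔJ 0 (1/2) = -(1/(2*β))) ∧
    ((Δ₂ 0 (-(1/2)) = 0 ∧ 0 < ΔJ 0 (-(1/2))) ∧
     (Δ₂ (1/2) (-(1/2)) ≠ 0 ∧ 0 < ΔJ (1/2) (-(1/2))) ∧
     (Δ₂ (1/2) δ ≠ 0 ∧ ΔJ (1/2) δ < 0) ∧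
     (Δ₂ 0 (1/2) = 0 ∧ ΔJ 0 (1/2) < 0)) := by
  have hcc : c' - c = ![-1, 0, 0] := by
    subst hc hc'; funext i; fin_cases i <;> norm_num
  have hΔ₂' : ∀ ρ σ : ℝ, Δ₂ ρ σ = -ρ / β := by
    intro ρ σ
    rw [hΔ₂, hcc, hSig]
    simp [Matrix.mulVec, dotProduct, Fin.sum_univ_three]
  have hΔJ' : ∀ ρ σ : ℝ, ΔJ ρ σ = -σ / β := by
    intro ρ σ
    rw [hΔJ, hcc, hSig]
    simp [Matrix.mulVec, dotProduct, Fin.sum_univ_three]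
  have hβ' : β ≠ 0 := ne_of_gt hβ
  refine ⟨⟨?_, ?_, ?_, ?_⟩, ?_⟩
  · rw [hSig]; exact aux_posdef _ _ (by norm_num)
  · rw [hSig]; exact aux_posdef _ _ (by norm_num)
  · rw [hSig]; exact aux_posdef _ _ (by nlinarith)
  · rw [hSig]; exact aux_posdef _ _ (by norm_num)
  simp only [hΔ₂', hΔJ']
  have e1 : -(-(1/2)) / β = 1/(2*β) := by field_simp
  have e2 : -(1/2) / β = -(1/(2*β)) := by field_simp
  have e3 : -δ / β = -(δ/β) := by ring
  have e4 : -(0:ℝ) / β = 0 := by simp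
  have p1 : 0 < 1/(2*β) := by positivity
  have p2 : -(1/(2*β)) < 0 := by linarith
  have p3 : -(δ/β) < 0 := by
    have : 0 < δ/β := div_pos hδ0 hβ
    linarith
  refine ⟨⟨e4, e1⟩, ⟨e2, e1⟩, ⟨e2, e3⟩, ⟨e4, e2⟩,
    ⟨e4, e1 ▸ p1⟩, ⟨?_, e1 ▸ p1⟩, ⟨?_, e3 ▸ p3⟩, e4, e2 ▸ p2⟩
  · rw [e2]; intro h; rw [h] at p2; exact lt_irrefl 0 p2
  · rw [e2]; intro h; rw [h] at p2; exact lt_irrefl 0 p2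
end
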